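/- Every locally indicable group is left-orderable. -/

import Mathlib

open Subsemigroup in
private lemma stmt6_key {G : Type*} [Group G]
    (h : ∀ H : Subgroup G, H.FG → H ≠ ⊥ →
      ∃ f : H →* Multiplicative ℤ, Function.Surjective f) :
    ∀ s : Finset G, (∀ g ∈ s, g ≠ (1:G)) →
      ∃ ε : G → Bool, (1:G) ∉
        Subsemigroup.closure {x : G | ∃ g ∈ s, x = if ε g then g else g⁻¹} := by
  classical
  intro s
  induction s using Finset.strongInduction with
  | _ s ih =>
  intro hs
  rcases s.eq_empty_or_nonempty with rfl | ⟨g0, hg0⟩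
  · refine ⟨fun _ => true, ?_⟩
    have : {x : G | ∃ g ∈ (∅ : Finset G), x = if true then g else g⁻¹} = ∅ := by simp
    rw [this, Subsemigroup.closure_empty]
    exact Subsemigroup.notMem_bot
  · set H : Subgroup G := Subgroup.closure ↑s with hH
    have hgH : ∀ g ∈ s, g ∈ H := fun g hg => Subgroup.subset_closure hg
    have hfg : H.FG := (Subgroup.fg_iff H).2 ⟨↑s, rfl, s.finite_toSet⟩
    have hbot : H ≠ ⊥ := by
      intro hb
      have := hgH g0 hg0
      rw [hb, Subgroup.mem_bot] at this
      exact hs g0 hg0 this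
    obtain ⟨f, hf⟩ := h H hfg hbot
    set w : G → ℤ := fun x => if hx : x ∈ H then Multiplicative.toAdd (f ⟨x, hx⟩) else 0
      with hwdef
    have hw_mem : ∀ (x : G) (hx : x ∈ H), w x = Multiplicative.toAdd (f ⟨x, hx⟩) :=
      fun x hx => dif_pos hx
    have hw_mul : ∀ x y, x ∈ H → y ∈ H → w (x * y) = w x + w y := by
      intro x y hx hy
      rw [hw_mem x hx, hw_mem y hy, hw_mem _ (mul_mem hx hy)]
      have : (⟨x * y, mul_mem hx hy⟩ : H) = ⟨x, hx⟩ * ⟨y, hy⟩ := rfl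
      rw [this, map_mul, toAdd_mul]
    have hw_inv : ∀ x, x ∈ H → w x⁻¹ = - w x := by
      intro x hx
      rw [hw_mem x hx, hw_mem _ (inv_mem hx)]
      have : (⟨x⁻¹, inv_mem hx⟩ : H) = (⟨x, hx⟩ : H)⁻¹ := rfl
      rw [this, map_inv, toAdd_inv]
    have hw_one : w (1 : G) = 0 := by
      rw [hw_mem 1 (one_mem H)]
      have : (⟨(1:G), one_mem H⟩ : H) = 1 := rfl
      rw [this, map_one, toAdd_one]
    -- some generator has nonzero value
    have hex : ∃ g ∈ s, w g ≠ 0 := by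
      by_contra hc
      push_neg at hc
      have himg : ∀ x : H, f x = 1 := by
        intro x
        have htop : Subgroup.closure (Subtype.val ⁻¹' (↑s : Set G)) = (⊤ : Subgroup H) :=
          Subgroup.closure_closure_coe_preimage
        have hx : x ∈ Subgroup.closure (Subtype.val ⁻¹' (↑s : Set G)) := by
          rw [htop]; exact Subgroup.mem_top x
        refine Subgroup.closure_induction (fun y hy => ?_) (map_one f)
          (fun a b _ _ ha hb => by rw [map_mul, ha, hb, mul_one])
          (fun a _ ha => by rw [map_inv, ha, inv_one]) hx
        have hyH : (y : G) ∈ H := y.2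
        have h0 : w (y : G) = 0 := hc _ hy
        rw [hw_mem _ hyH] at h0
        have : (⟨(y : G), hyH⟩ : H) = y := Subtype.ext rfl
        rw [this] at h0
        have := congrArg Multiplicative.ofAdd h0
        simpa using this
      obtain ⟨x, hx⟩ := hf (Multiplicative.ofAdd 1)
      rw [himg x] at hx
      have : (1 : ℤ) = 0 := by
        have := congrArg Multiplicative.toAdd hx
        simpa using this.symm
      exact one_ne_zero this
    set s₀ : Finset G := s.filter (fun g => w g = 0) with hs₀def
    have hssub : s₀ ⊂ s := Finset.filter_ssubset.2 hex
    have hs₀sub : s₀ ⊆ s := Finset.filter_subset _ _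
    obtain ⟨ε₀, hε₀⟩ := ih s₀ hssub (fun g hg => hs g (hs₀sub hg))
    set T₀ : Set G := {x : G | ∃ g ∈ s₀, x = if ε₀ g then g else g⁻¹} with hT₀
    set ε : G → Bool := fun g => if w g = 0 then ε₀ g else decide (0 < w g) with hε
    refine ⟨ε, ?_⟩
    intro h1
    -- invariant over the closure
    have main : ∀ (x : G), x ∈ Subsemigroup.closure {x : G | ∃ g ∈ s, x = if ε g then g else g⁻¹} →
        x ∈ H ∧ 0 ≤ w x ∧ (w x = 0 → x ∈ Subsemigroup.closure T₀) := by
      intro x hx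
      refine Subsemigroup.closure_induction (p := fun x _ =>
          x ∈ H ∧ 0 ≤ w x ∧ (w x = 0 → x ∈ Subsemigroup.closure T₀)) ?_ ?_ hx
      · rintro x ⟨g, hg, rfl⟩
        by_cases hwg : w g = 0
        · have hεg : ε g = ε₀ g := if_pos hwg
          have hgs₀ : g ∈ s₀ := Finset.mem_filter.2 ⟨hg, hwg⟩
          rw [hεg]
          have hxH : (if ε₀ g = true then g else g⁻¹) ∈ H := by
            cases ε₀ g
            · rw [if_neg (by simp)]; exact inv_mem (hgH g hg)
            · rw [if_pos rfl]; exact hgH g hg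
          have hxw : w (if ε₀ g = true then g else g⁻¹) = 0 := by
            cases ε₀ g
            · rw [if_neg (by simp), hw_inv g (hgH g hg), hwg, neg_zero]
            · rw [if_pos rfl, hwg]
          exact ⟨hxH, le_of_eq hxw.symm,
            fun _ => Subsemigroup.subset_closure ⟨g, hgs₀, rfl⟩⟩
        · have hεg : ε g = decide (0 < w g) := if_neg hwg
          rcases lt_or_gt_of_ne hwg with hneg | hpos
          · have : ε g = false := by rw [hεg]; simp [not_lt.2 (le_of_lt hneg)]
            rw [this, if_neg (by simp)]
            refine ⟨inv_mem (hgH g hg), ?_, fun h0 => absurd ?_ hwg⟩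
            · rw [hw_inv g (hgH g hg)]; omega
            · rw [hw_inv g (hgH g hg)] at h0; omega
          · have : ε g = true := by rw [hεg]; simp [hpos]
            rw [this, if_pos rfl]
            exact ⟨hgH g hg, le_of_lt hpos, fun h0 => absurd h0 (by omega)⟩
      · rintro x y hx hy ⟨hxH, hx0, hxc⟩ ⟨hyH, hy0, hyc⟩
        refine ⟨mul_mem hxH hyH, ?_, ?_⟩
        · rw [hw_mul x y hxH hyH]; omega
        · intro h0
          rw [hw_mul x y hxH hyH] at h0
          exact mul_mem (hxc (by omega)) (hyc (by omega))
    obtain ⟨-, -, h0⟩ := main 1 h1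
    exact hε₀ (h0 hw_one)

/-- Every locally indicable group is left-orderable. -/
theorem stmt6 {G : Type*} [Group G]
    (h : ∀ H : Subgroup G, H.FG → H ≠ ⊥ →
      ∃ f : H →* Multiplicative ℤ, Function.Surjective f) :
    ∃ r : G → G → Prop, IsStrictTotalOrder G r ∧
      ∀ a b c : G, r a b ↔ r (c * a) (c * b) := by
  classical
  have key := stmt6_key h
  -- the family of closed sets of sign assignments
  set A : Finset G → Set (G → Bool) := fun s =>
    {ε | (1:G) ∉ Subsemigroup.closure
      {x : G | ∃ g ∈ s, g ≠ 1 ∧ x = if ε g then g else g⁻¹}} with hA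
  have hmono : ∀ s t : Finset G, s ⊆ t → A t ⊆ A s := by
    intro s t hst ε hε hmem
    refine hε (Subsemigroup.closure_mono ?_ hmem)
    rintro x ⟨g, hg, hg1, rfl⟩
    exact ⟨g, hst hg, hg1, rfl⟩
  have hne : ∀ s : Finset G, (A s).Nonempty := by
    intro s
    obtain ⟨ε, hε⟩ := key (s.filter (· ≠ 1)) (fun g hg => (Finset.mem_filter.1 hg).2)
    refine ⟨ε, fun hmem => hε ?_⟩
    have heq : {x : G | ∃ g ∈ s, g ≠ 1 ∧ x = if ε g then g else g⁻¹}
        = {x : G | ∃ g ∈ s.filter (· ≠ 1), x = if ε g then g else g⁻¹} := by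
      ext x
      simp only [Set.mem_setOf_eq, Finset.mem_filter]
      constructor
      · rintro ⟨g, hg, hg1, rfl⟩; exact ⟨g, ⟨hg, hg1⟩, rfl⟩
      · rintro ⟨g, ⟨hg, hg1⟩, rfl⟩; exact ⟨g, hg, hg1, rfl⟩
    rw [heq] at hmem
    exact hmem
  have hclosed : ∀ s : Finset G, IsClosed (A s) := by
    intro s
    have heq : A s = (fun ε : G → Bool => fun g : (↑s : Set G) => ε g) ⁻¹'
        {φ : (↑s : Set G) → Bool | (1:G) ∉ Subsemigroup.closure
          {x : G | ∃ g : (↑s : Set G), (g : G) ≠ 1 ∧ x = if φ g then (g : G) else (g : G)⁻¹}} := by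
      ext ε
      simp only [Set.mem_preimage, Set.mem_setOf_eq, hA]
      constructor
      · intro hε hmem
        refine hε ?_
        refine Subsemigroup.closure_mono ?_ hmem
        rintro x ⟨⟨g, hg⟩, hg1, rfl⟩
        exact ⟨g, hg, hg1, rfl⟩
      · intro hε hmem
        refine hε ?_
        refine Subsemigroup.closure_mono ?_ hmem
        rintro x ⟨g, hg, hg1, rfl⟩
        exact ⟨⟨g, hg⟩, hg1, rfl⟩
    rw [heq]
    haveI hdisc : DiscreteTopology ((↑s : Set G) → Bool) := Pi.discreteTopology
    refine IsClosed.preimage ?_ (isClosed_discrete _)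
    exact continuous_pi fun (g : (↑s : Set G)) => continuous_apply (g : G)
  haveI : Nonempty (Finset G) := ⟨∅⟩
  have hcompact : ∀ s : Finset G, IsCompact (A s) := fun s => (hclosed s).isCompact
  have hdir : Directed (· ⊇ ·) A := by
    intro s t
    exact ⟨s ∪ t, hmono s (s ∪ t) Finset.subset_union_left,
      hmono t (s ∪ t) Finset.subset_union_right⟩
  obtain ⟨ε, hε⟩ := IsCompact.nonempty_iInter_of_directed_nonempty_isCompact_isClosed
    A hdir hne hcompact hclosed
  have hεA : ∀ s : Finset G, ε ∈ A s := by
    intro s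
    exact Set.mem_iInter.1 hε s
  -- the positive cone
  set P : Subsemigroup G := Subsemigroup.closure
    {x : G | ∃ g : G, g ≠ 1 ∧ x = if ε g then g else g⁻¹} with hP
  have h1P : (1 : G) ∉ P := by
    intro h1
    have main : ∀ (x : G), x ∈ P → ∃ s : Finset G, x ∈ Subsemigroup.closure
        {y : G | ∃ g ∈ s, g ≠ 1 ∧ y = if ε g then g else g⁻¹} := by
      intro x hx
      refine Subsemigroup.closure_induction (p := fun x _ => ∃ s : Finset G,
        x ∈ Subsemigroup.closure {y : G | ∃ g ∈ s, g ≠ 1 ∧ y = if ε g then g else g⁻¹})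
        ?_ ?_ hx
      · rintro x ⟨g, hg1, rfl⟩
        exact ⟨{g}, Subsemigroup.subset_closure ⟨g, Finset.mem_singleton_self g, hg1, rfl⟩⟩
      · rintro x y hx hy ⟨sx, hsx⟩ ⟨sy, hsy⟩
        refine ⟨sx ∪ sy, mul_mem ?_ ?_⟩
        · refine Subsemigroup.closure_mono ?_ hsx
          rintro z ⟨g, hg, hg1, rfl⟩
          exact ⟨g, Finset.mem_union_left _ hg, hg1, rfl⟩
        · refine Subsemigroup.closure_mono ?_ hsy
          rintro z ⟨g, hg, hg1, rfl⟩
          exact ⟨g, Finset.mem_union_right _ hg, hg1, rfl⟩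
    obtain ⟨s, hs⟩ := main 1 h1
    exact hεA s hs
  have hpos : ∀ g : G, g ≠ 1 → g ∈ P ∨ g⁻¹ ∈ P := by
    intro g hg1
    cases hb : ε g with
    | true => exact Or.inl (Subsemigroup.subset_closure ⟨g, hg1, by rw [hb, if_pos rfl]⟩)
    | false => exact Or.inr (Subsemigroup.subset_closure ⟨g, hg1, by rw [hb]; simp⟩)
  have hnotboth : ∀ g : G, g ∈ P → g⁻¹ ∈ P → False := by
    intro g hg hg'
    have := mul_mem hg hg'
    rw [mul_inv_cancel] at this
    exact h1P this
  refine ⟨fun a b => a⁻¹ * b ∈ P,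
    { toTrichotomous := ⟨?_⟩,
      toIsStrictOrder := { toIrrefl := ⟨?_⟩, toIsTrans := ⟨?_⟩ } }, ?_⟩
  · -- trichotomous
    intro a b hn1 hn2
    suffices H : a⁻¹ * b ∈ P ∨ a = b ∨ b⁻¹ * a ∈ P by
      rcases H with H | H | H
      · exact absurd H hn1
      · exact H
      · exact absurd H hn2
    by_cases hab : a = b
    · exact Or.inr (Or.inl hab)
    · have hne1 : a⁻¹ * b ≠ 1 := by
        intro hc
        exact hab (by rw [← mul_one a, ← hc, ← mul_assoc, mul_inv_cancel, one_mul])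
      rcases hpos _ hne1 with hp | hp
      · exact Or.inl hp
      · right; right
        have : (a⁻¹ * b)⁻¹ = b⁻¹ * a := by group
        rwa [this] at hp
  · -- irrefl
    intro a ha
    rw [inv_mul_cancel] at ha
    exact h1P ha
  · -- trans
    intro a b c hab hbc
    have := mul_mem hab hbc
    have heq : (a⁻¹ * b) * (b⁻¹ * c) = a⁻¹ * c := by group
    rwa [heq] at this
  · -- left invariance
    intro a b c
    show a⁻¹ * b ∈ P ↔ (c * a)⁻¹ * (c * b) ∈ P
    have heq : (c * a)⁻¹ * (c * b) = a⁻¹ * b := by group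
    rw [heq]
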